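/- Let n ≥ rk with r ≥ 2, k ≥ 1, and let G be a spanning sub-hypergraph of the Kneser hypergraph KG^r_{n,k}. Suppose there exists a family A = (A₁, …, A_l) of l pairwise disjoint r-element subsets of [n] that is empty in G. Then χ(G) ≤ ⌈(n − l)/(r − 1)⌉, i.e., there is a coloring of all k-element subsets of [n] with ⌈(n − l)/(r − 1)⌉ colors such that no edge of G is monochromatic. -/

import Mathlib

open Filter

/-- The edge set of the Kneser hypergraph `KG^r_{n,k}`: edges are `r`-element
collections of pairwise disjoint `k`-element subsets of `[n]`. -/
def kneserHyperEdges (n k r : ℕ) : Set (Finset {A : Finset (Fin n) // A.card = k}) :=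
  {e | e.card = r ∧ ∀ A ∈ e, ∀ B ∈ e, A ≠ B → Disjoint A.1 B.1}

/-- The family `A = (A₁, …, A_l)` of pairwise disjoint `r`-sets is *empty* in the
sub-hypergraph with edge set `G`: for each `i`, no edge of `G` consists entirely of
`k`-sets lying inside `A₁ ∪ … ∪ A_i` and meeting `A_i`. -/
def emptyFamilyIn {n k : ℕ} (G : Set (Finset {A : Finset (Fin n) // A.card = k}))
    {l : ℕ} (A : Fin l → Finset (Fin n)) : Prop :=
  ∀ i : Fin l, ∀ e ∈ G,
    ¬ (∀ v ∈ e, v.1 ⊆ (Finset.Iic i).biUnion A ∧ (v.1 ∩ A i).Nonempty)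

/-- If a spanning sub-hypergraph `G` of `KG^r_{n,k}` admits an empty family of `l`
pairwise disjoint `r`-sets, then `χ(G) ≤ ⌈(n − l)/(r − 1)⌉`. -/
theorem chromatic_bound_of_empty_family (n k r l : ℕ) (hk : 1 ≤ k) (hr : 2 ≤ r)
    (hn : r * k ≤ n)
    (G : Set (Finset {A : Finset (Fin n) // A.card = k}))
    (hG : G ⊆ kneserHyperEdges n k r)
    (A : Fin l → Finset (Fin n))
    (hcard : ∀ i, (A i).card = r)
    (hdisj : ∀ i j, i ≠ j → Disjoint (A i) (A j))
    (hempty : emptyFamilyIn G A) :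
    ∃ c : {S : Finset (Fin n) // S.card = k} → Fin ⌈((n : ℝ) - l) / ((r : ℝ) - 1)⌉₊,
      ∀ e ∈ G, ∃ v ∈ e, ∃ w ∈ e, c v ≠ c w := by
  classical
  set t : ℕ := ⌈((n : ℝ) - l) / ((r : ℝ) - 1)⌉₊ with ht
  have hr2 : (2:ℝ) ≤ (r:ℝ) := by exact_mod_cast hr
  have hrpos : (0:ℝ) < (r:ℝ) - 1 := by linarith
  set U : Finset (Fin n) := Finset.univ.biUnion A with hU
  have hUcard : U.card = l * r := by
    rw [hU, Finset.card_biUnion (fun i _ j _ hij => hdisj i j hij)]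
    simp [hcard, Finset.card_univ, mul_comm]
  have hlrn : l * r ≤ n := by
    calc l * r = U.card := hUcard.symm
    _ ≤ (Finset.univ : Finset (Fin n)).card := Finset.card_le_card (Finset.subset_univ _)
    _ = n := by simp
  set W : Finset (Fin n) := Uᶜ with hW
  set m : ℕ := W.card with hm
  have hmval : l * r + m = n := by
    have : m = n - l * r := by
      rw [hm, hW, Finset.card_compl, hUcard, Fintype.card_fin]
    omega
  -- bounds on t
  have hlt : l ≤ t := by
    have h1 : (l:ℝ) ≤ ((n : ℝ) - l) / ((r : ℝ) - 1) := by
      rw [le_div_iff₀ hrpos]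
      have h2 : (l:ℝ) * r ≤ n := by exact_mod_cast hlrn
      nlinarith
    calc l = ⌈(l:ℝ)⌉₊ := by simp
    _ ≤ t := Nat.ceil_mono h1
  have htpos : 0 < t := by
    rw [ht, Nat.ceil_pos]
    have h2l : 2 * l ≤ n := le_trans (by nlinarith) hlrn
    have hn2 : 2 ≤ n := le_trans (by nlinarith) hn
    have hln : l < n := by omega
    have : (0:ℝ) < (n:ℝ) - l := by
      have : (l:ℝ) < n := by exact_mod_cast hln
      linarith
    positivity
  set cap : ℕ := (m - 1) / (r - 1) with hcap
  have hcaplt : m ≠ 0 → l + cap < t := by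
    intro hm0
    rw [ht, Nat.lt_ceil, lt_div_iff₀ hrpos]
    have h1 : cap * (r-1) ≤ m - 1 := Nat.div_mul_le_self _ _
    have h2 : cap * (r-1) + 1 ≤ m := by omega
    have h3 : ((cap * (r-1) + 1 : ℕ) : ℝ) ≤ (m:ℕ) := by exact_mod_cast h2
    have h4 : (l:ℝ) * r + m = n := by exact_mod_cast hmval
    have h5 : ((r:ℕ) - 1 : ℕ) = r - 1 := rfl
    have h6 : (((r:ℕ) - 1 : ℕ) : ℝ) = (r:ℝ) - 1 := by
      have : 1 ≤ r := by omega
      push_cast [this]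
      ring
    push_cast at h3
    rw [h6] at h3
    push_cast
    nlinarith
  -- idx
  set idx : Fin n → ℕ := fun x => (W.filter (fun y => y < x)).card with hidx
  have idx_lt : ∀ x ∈ W, idx x < m := by
    intro x hx
    apply Finset.card_lt_card
    constructor
    · exact Finset.filter_subset _ _
    · intro hsub
      have := hsub hx
      simp at this
  have idx_mono : ∀ x ∈ W, ∀ y ∈ W, x < y → idx x < idx y := by
    intro x hx y hy hxy
    apply Finset.card_lt_card
    constructor
    · intro z hz
      simp only [Finset.mem_filter] at hz ⊢
      exact ⟨hz.1, lt_trans hz.2 hxy⟩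
    · intro hsub
      have hx' : x ∈ W.filter (fun z => z < y) := by
        simp only [Finset.mem_filter]; exact ⟨hx, hxy⟩
      have := hsub hx'
      simp only [Finset.mem_filter] at this
      exact absurd this.2 (lt_irrefl x)
  have idx_inj : ∀ x ∈ W, ∀ y ∈ W, idx x = idx y → x = y := by
    intro x hx y hy hxy
    rcases lt_trichotomy x y with h | h | h
    · exact absurd hxy (Nat.ne_of_lt (idx_mono x hx y hy h))
    · exact h
    · exact absurd hxy.symm (Nat.ne_of_lt (idx_mono y hy x hx h))
  -- class card bound
  have hclass : ∀ b : ℕ,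
      (W.filter (fun x => min (idx x / (r-1)) cap = b)).card ≤ r - 1 := by
    intro b
    have : (W.filter (fun x => min (idx x / (r-1)) cap = b)).card
        ≤ (Finset.Ico (b*(r-1)) (b*(r-1)+(r-1))).card := by
      apply Finset.card_le_card_of_injOn idx
      · intro x hx
        simp only [Finset.mem_coe, Finset.mem_filter] at hx
        obtain ⟨hxW, hxb⟩ := hx
        have hmpos : 0 < m := by
          rw [hm]
          exact Finset.card_pos.mpr ⟨x, hxW⟩
        have hxm : idx x < m := idx_lt x hxW
        have hdm := Nat.div_add_mod (idx x) (r-1)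
        have hmod : idx x % (r-1) < r - 1 := Nat.mod_lt _ (by omega)
        have hcd := Nat.div_add_mod (m-1) (r-1)
        have hcmod : (m-1) % (r-1) < r - 1 := Nat.mod_lt _ (by omega)
        rw [Finset.mem_coe, Finset.mem_Ico]
        rcases le_or_gt (idx x / (r-1)) cap with hle | hgt
        · rw [min_eq_left hle] at hxb
          rw [hxb] at hdm
          have hcomm : b * (r-1) = (r-1) * b := Nat.mul_comm _ _
          omega
        · rw [min_eq_right (le_of_lt hgt)] at hxb
          have e2 : (r-1) * cap + (m-1) % (r-1) = m - 1 := by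
            rw [hcap]; exact Nat.div_add_mod _ _
          have e3 : (r-1) * cap ≤ (r-1) * (idx x / (r-1)) :=
            Nat.mul_le_mul_left _ (by omega)
          have e4 : (r-1) * (idx x / (r-1)) ≤ idx x := by
            have := Nat.div_mul_le_self (idx x) (r-1)
            omega
          have hcomm : b * (r-1) = (r-1) * b := Nat.mul_comm _ _
          rw [← hxb] at hcomm ⊢
          omega
      · intro x hx y hy hxy
        simp only [Finset.coe_filter, Set.mem_setOf_eq] at hx hy
        exact idx_inj x hx.1 y hy.1 hxy
    simpa using this
  -- basic size facts
  have hn2 : 2 ≤ n := le_trans (by nlinarith) hn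
  -- the coloring (as a natural number)
  set c0 : {S : Finset (Fin n) // S.card = k} → ℕ := fun S =>
    if h : (S.1 ∩ W).Nonempty then l + min (idx ((S.1 ∩ W).min' h) / (r-1)) cap
    else if h2 : (Finset.univ.filter (fun i => (S.1 ∩ A i).Nonempty)).Nonempty
      then ((Finset.univ.filter (fun i => (S.1 ∩ A i).Nonempty)).max' h2).val
      else 0 with hc0def
  have hc0W : ∀ S (h : (S.1 ∩ W).Nonempty),
      c0 S = l + min (idx ((S.1 ∩ W).min' h) / (r-1)) cap := by
    intro S h
    rw [hc0def]
    exact dif_pos h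
  have hc0U : ∀ S, ¬(S.1 ∩ W).Nonempty → ∃ i : Fin l, c0 S = i.val ∧
      (S.1 ∩ A i).Nonempty ∧ ∀ j : Fin l, (S.1 ∩ A j).Nonempty → j ≤ i := by
    intro S h
    have hSne : S.1.Nonempty := Finset.card_pos.mp (by rw [S.2]; omega)
    have hFne : (Finset.univ.filter (fun i => (S.1 ∩ A i).Nonempty)).Nonempty := by
      obtain ⟨x, hx⟩ := hSne
      have hxU : x ∈ U := by
        by_contra hxU
        have hxW : x ∈ W := by rw [hW]; simpa using hxU
        exact h ⟨x, Finset.mem_inter.mpr ⟨hx, hxW⟩⟩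
      rw [hU] at hxU
      simp only [Finset.mem_biUnion, Finset.mem_univ, true_and] at hxU
      obtain ⟨j, hj⟩ := hxU
      exact ⟨j, Finset.mem_filter.mpr ⟨Finset.mem_univ _,
        ⟨x, Finset.mem_inter.mpr ⟨hx, hj⟩⟩⟩⟩
    refine ⟨(Finset.univ.filter (fun i => (S.1 ∩ A i).Nonempty)).max' hFne, ?_, ?_, ?_⟩
    · rw [hc0def]
      simp only [dif_neg h, dif_pos hFne]
    · have := Finset.max'_mem _ hFne
      simp only [Finset.mem_filter] at this
      exact this.2
    · intro j hj
      exact Finset.le_max' _ j (Finset.mem_filter.mpr ⟨Finset.mem_univ _, hj⟩)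
  have hbound : ∀ S, c0 S < t := by
    intro S
    by_cases h : (S.1 ∩ W).Nonempty
    · rw [hc0W S h]
      have hm0 : m ≠ 0 := by
        obtain ⟨x, hx⟩ := h
        have hxW : x ∈ W := (Finset.mem_inter.mp hx).2
        have := Finset.card_pos.mpr ⟨x, hxW⟩
        omega
      have h1 := hcaplt hm0
      have h2 : min (idx ((S.1 ∩ W).min' h) / (r-1)) cap ≤ cap := min_le_right _ _
      omega
    · obtain ⟨i, hi, _, _⟩ := hc0U S h
      rw [hi]
      exact lt_of_lt_of_le i.isLt hlt
  refine ⟨fun S => ⟨c0 S, hbound S⟩, ?_⟩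
  intro e he
  by_contra hmono
  push_neg at hmono
  have hmono' : ∀ v ∈ e, ∀ w ∈ e, c0 v = c0 w := fun v hv w hw =>
    congrArg Fin.val (hmono v hv w hw)
  obtain ⟨hecard, hedisj⟩ := hG he
  have hene : e.Nonempty := Finset.card_pos.mp (by omega)
  obtain ⟨v0, hv0⟩ := hene
  by_cases h : (v0.1 ∩ W).Nonempty
  · -- W branch : pigeonhole
    set b : ℕ := min (idx ((v0.1 ∩ W).min' h) / (r-1)) cap with hb
    have hall : ∀ v ∈ e, ∃ hv : (v.1 ∩ W).Nonempty,
        min (idx ((v.1 ∩ W).min' hv) / (r-1)) cap = b := by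
      intro v hv
      have hcv : c0 v = l + b := by rw [hmono' v hv v0 hv0, hc0W v0 h]
      by_cases hw : (v.1 ∩ W).Nonempty
      · refine ⟨hw, ?_⟩
        rw [hc0W v hw] at hcv
        exact Nat.add_left_cancel hcv
      · obtain ⟨i, hi, _, _⟩ := hc0U v hw
        rw [hi] at hcv
        exact absurd hcv (Nat.ne_of_lt (lt_of_lt_of_le i.isLt (Nat.le_add_right l _)))
    have hinj : e.card ≤ (W.filter (fun x => min (idx x / (r-1)) cap = b)).card := by
      apply Finset.card_le_card_of_injOn
        (fun v => if hv : (v.1 ∩ W).Nonempty then (v.1 ∩ W).min' hv else ⟨0, by omega⟩)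
      · intro v hv
        obtain ⟨hvW, hvb⟩ := hall v hv
        simp only [Finset.mem_coe, dif_pos hvW]
        have hmem := Finset.min'_mem (v.1 ∩ W) hvW
        rw [Finset.mem_inter] at hmem
        exact Finset.mem_filter.mpr ⟨hmem.2, hvb⟩
      · intro v hv w hw hvw
        simp only [Finset.mem_coe] at hv hw
        obtain ⟨hvW, _⟩ := hall v hv
        obtain ⟨hwW, _⟩ := hall w hw
        simp only [dif_pos hvW, dif_pos hwW] at hvw
        by_contra hne
        have hd := hedisj v hv w hw hne
        have h1 := Finset.min'_mem (v.1 ∩ W) hvW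
        have h2 := Finset.min'_mem (w.1 ∩ W) hwW
        rw [hvw] at h1
        rw [Finset.mem_inter] at h1 h2
        exact Finset.disjoint_left.mp hd h1.1 h2.1
    have hcb := hclass b
    omega
  · -- U branch : emptiness of the family
    obtain ⟨i0, hi0, hi0ne, hi0max⟩ := hc0U v0 h
    refine hempty i0 e he ?_
    intro v hv
    have hcv : c0 v = i0.val := by rw [hmono' v hv v0 hv0, hi0]
    by_cases hw : (v.1 ∩ W).Nonempty
    · rw [hc0W v hw] at hcv
      exact absurd hcv.symm (Nat.ne_of_lt (lt_of_lt_of_le i0.isLt (Nat.le_add_right l _)))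
    · obtain ⟨i, hi, hine, himax⟩ := hc0U v hw
      have hii : i = i0 := Fin.ext (by rw [hi] at hcv; exact hcv)
      subst hii
      constructor
      · intro x hx
        have hxU : x ∈ U := by
          by_contra hxU
          have hxW : x ∈ W := by rw [hW]; simpa using hxU
          exact hw ⟨x, Finset.mem_inter.mpr ⟨hx, hxW⟩⟩
        rw [hU] at hxU
        simp only [Finset.mem_biUnion, Finset.mem_univ, true_and] at hxU
        obtain ⟨j, hj⟩ := hxU
        have hji : j ≤ i := himax j ⟨x, Finset.mem_inter.mpr ⟨hx, hj⟩⟩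
        exact Finset.mem_biUnion.mpr ⟨j, Finset.mem_Iic.mpr hji, hj⟩
      · exact hine
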